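/- Let (G,·) be an abelian group and (G,f) = der^n(G,·), i.e., f(x₁,...,xₙ) = x₁·x₂···xₙ. Then Aut(G,f) ≅ Aut(G,·) ⋉ Z̄(G), where Z̄(G) = {a ∈ G : a^(n-1) = 1} and Aut(G,·) acts on Z̄(G) naturally. -/

import Mathlib

/-- The automorphism group of an `n`-ary groupoid `(G,f)`. -/
def nAryAut {G : Type*} (n : ℕ) (f : (Fin n → G) → G) [DecidableEq G] :
    Subgroup (Equiv.Perm G) where
  carrier := {ψ | ∀ x : Fin n → G, ψ (f x) = f (fun i => ψ (x i))}
  one_mem' := by intro x; simp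
  mul_mem' := by
    intro ψ χ hψ hχ x
    simp only [Equiv.Perm.mul_apply, Set.mem_setOf_eq] at *
    rw [hχ, hψ]
  inv_mem' := by
    intro ψ hψ x
    apply ψ.injective
    rw [Equiv.Perm.coe_inv, Equiv.apply_symm_apply, hψ]
    congr 1
    funext i
    rw [Equiv.apply_symm_apply]

lemma mem_nAryAut_iff {G : Type*} [DecidableEq G] (n : ℕ) (f : (Fin n → G) → G)
    (ψ : Equiv.Perm G) :
    ψ ∈ nAryAut n f ↔ ∀ x : Fin n → G, ψ (f x) = f (fun i => ψ (x i)) := Iff.rfl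

/-- Restriction of automorphisms to a stable subgroup. -/
def restrictAut {G : Type*} [CommGroup G] (S : Subgroup G)
    (h : ∀ (φ : MulAut G) (a : G), a ∈ S → φ a ∈ S) : MulAut G →* MulAut S where
  toFun φ :=
    { toFun := fun a => ⟨φ a, h φ a a.2⟩
      invFun := fun a => ⟨φ⁻¹ (a : G), h φ⁻¹ (a : G) a.2⟩
      left_inv := fun a => Subtype.ext (by simp)
      right_inv := fun a => Subtype.ext (by simp)
      map_mul' := fun a b => Subtype.ext (by push_cast; exact map_mul φ (a:G) (b:G)) }
  map_one' := by ext a; rfl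
  map_mul' := fun φ χ => by ext a; rfl

theorem aut_of_derived_abelian {G : Type*} [CommGroup G] [DecidableEq G]
    (n : ℕ) (hn : 2 ≤ n) :
    ∃ S : Subgroup G,
      (∀ a : G, a ∈ S ↔ a ^ (n - 1) = 1) ∧
      ∃ act : MulAut G →* MulAut S,
        (∀ (φ : MulAut G) (a : S), ((act φ a : G)) = φ (a : G)) ∧
        Nonempty ((S ⋊[act] MulAut G)
          ≃* nAryAut n (fun x : Fin n → G => (List.ofFn x).prod)) := by
  obtain ⟨m, rfl⟩ : ∃ m, n = m + 2 := ⟨n - 2, by omega⟩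
  clear hn
  have hmem : ∀ a : G, a ∈ (powMonoidHom (m + 1) : G →* G).ker ↔ a ^ (m + 2 - 1) = 1 := by
    intro a; simp [MonoidHom.mem_ker]
  have hstab : ∀ (φ : MulAut G) (a : G),
      a ∈ (powMonoidHom (m + 1) : G →* G).ker → φ a ∈ (powMonoidHom (m + 1) : G →* G).ker := by
    intro φ a ha
    simp only [MonoidHom.mem_ker, powMonoidHom_apply] at *
    rw [← map_pow, ha, map_one]
  refine ⟨(powMonoidHom (m + 1) : G →* G).ker, hmem,
    restrictAut _ hstab, fun φ a => rfl, ⟨?_⟩⟩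
  set S := (powMonoidHom (m + 1) : G →* G).ker with hS
  set f : (Fin (m + 2) → G) → G := fun x => (List.ofFn x).prod with hf
  -- forward membership
  have key : ∀ a : G, a ^ (m + 1) = 1 → ∀ φ : MulAut G,
      (φ.toEquiv.trans (Equiv.mulLeft a)) ∈ nAryAut (m + 2) f := by
    intro a ha φ
    rw [mem_nAryAut_iff]
    intro x
    show a * φ ((List.ofFn x).prod) = (List.ofFn fun i => a * φ (x i)).prod
    simp only [List.prod_ofFn, map_prod, Finset.prod_mul_distrib, Finset.prod_const,
      Finset.card_univ, Fintype.card_fin]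
    have : a ^ (m + 2) = a := by
      rw [pow_succ, ha, one_mul]
    rw [this]
  have h01 : (0 : Fin (m + 2)) ≠ 1 := by simp [Fin.ext_iff]
  -- decomposition of an automorphism
  have decomp : ∀ ψ : Equiv.Perm G, ψ ∈ nAryAut (m + 2) f →
      (ψ 1) ^ (m + 1) = 1 ∧ ∀ x y : G, ψ (x * y) = (ψ 1)⁻¹ * (ψ x * ψ y) := by
    intro ψ hψ
    rw [mem_nAryAut_iff] at hψ
    have h1 : ψ 1 ^ (m + 1) = 1 := by
      have := hψ (fun _ => 1)
      simp only [hf, List.prod_ofFn, Finset.prod_const_one, Finset.prod_const,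
        Finset.card_univ, Fintype.card_fin] at this
      have h2 : ψ 1 ^ (m + 1) * ψ 1 = 1 * ψ 1 := by
        rw [← pow_succ, ← this, one_mul]
      exact mul_right_cancel h2
    refine ⟨h1, fun x y => ?_⟩
    have hm : ψ 1 ^ m = (ψ 1)⁻¹ := by
      have : ψ 1 ^ m * ψ 1 = 1 := by rw [← pow_succ, h1]
      exact eq_inv_of_mul_eq_one_left this
    set v : Fin (m + 2) → G :=
      Function.update (Function.update (fun _ => (1 : G)) 0 x) 1 y with hv
    have h0mem : (0 : Fin (m + 2)) ∈ (Finset.univ \ {1} : Finset (Fin (m + 2))) := by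
      simp [h01]
    have hvprod : (List.ofFn v).prod = x * y := by
      rw [List.prod_ofFn, hv, Finset.prod_update_of_mem (Finset.mem_univ _),
        Finset.prod_update_of_mem h0mem]
      simp [mul_comm]
    have hcomp : (fun i => ψ (v i)) =
        Function.update (Function.update (fun _ => ψ 1) 0 (ψ x)) 1 (ψ y) := by
      funext i
      simp only [hv, Function.update_apply]
      split_ifs <;> rfl
    have hcard : ((Finset.univ \ {1} : Finset (Fin (m + 2))) \ {0}).card = m := by
      rw [Finset.card_sdiff_of_subset (by simpa using h0mem), Finset.card_sdiff_of_subset (by simp)]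
      simp
    have hψprod : (List.ofFn fun i => ψ (v i)).prod = ψ y * (ψ x * (ψ 1) ^ m) := by
      rw [List.prod_ofFn, hcomp, Finset.prod_update_of_mem (Finset.mem_univ _),
        Finset.prod_update_of_mem h0mem, Finset.prod_const, hcard]
    have := hψ v
    rw [hf] at this
    simp only at this
    rw [hvprod, hψprod, hm] at this
    rw [this]
    simp [mul_comm, mul_left_comm, mul_assoc]
  -- the monoid hom
  have hSmem : ∀ a : S, (a : G) ^ (m + 1) = 1 := by
    intro a
    simpa using MonoidHom.mem_ker.mp a.2
  have hact : ∀ (χ : MulAut G) (b : S), ((restrictAut S hstab χ b : G)) = χ (b : G) :=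
    fun _ _ => rfl
  let F : (S ⋊[restrictAut S hstab] MulAut G) →* ↥(nAryAut (m + 2) f) :=
    { toFun := fun p => ⟨(p.right : MulAut G).toEquiv.trans (Equiv.mulLeft (p.left : G)),
        key _ (hSmem p.left) p.right⟩
      map_one' := by
        apply Subtype.ext
        apply Equiv.ext
        intro x
        simp
      map_mul' := fun p q => by
        apply Subtype.ext
        apply Equiv.ext
        intro x
        show ((p * q).left : G) * (p * q).right x =
          (p.left : G) * p.right ((q.left : G) * q.right x)
        simp [mul_assoc, hact] }
  have hinj : Function.Injective F := by
    rw [injective_iff_map_eq_one]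
    intro p hp
    have hp' : ∀ x : G, (p.left : G) * p.right x = x := by
      intro x
      have := congrArg (fun (σ : ↥(nAryAut (m + 2) f)) => (σ : Equiv.Perm G) x) hp
      simp at this
      exact this
    have hleft : (p.left : G) = 1 := by
      have := hp' 1
      simpa using this
    have hright : p.right = 1 := by
      ext x
      have := hp' x
      rw [hleft, one_mul] at this
      simpa using this
    ext
    · simp [hleft]
    · simp [hright]
  have hsurj : Function.Surjective F := by
    rintro ⟨ψ, hψ⟩
    obtain ⟨ha, hmul⟩ := decomp ψ hψ
    set a := ψ 1 with hadef
    let φ : MulAut G :=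
      { toFun := fun x => a⁻¹ * ψ x
        invFun := fun y => ψ.symm (a * y)
        left_inv := fun x => by simp
        right_inv := fun y => by simp
        map_mul' := fun x y => by
          show a⁻¹ * ψ (x * y) = (a⁻¹ * ψ x) * (a⁻¹ * ψ y)
          rw [hmul]
          simp [mul_comm, mul_left_comm, mul_assoc] }
    refine ⟨⟨⟨a, ?_⟩, φ⟩, ?_⟩
    · simpa [hS, MonoidHom.mem_ker] using ha
    · apply Subtype.ext
      apply Equiv.ext
      intro x
      show a * (a⁻¹ * ψ x) = ψ x
      simp
  exact MulEquiv.ofBijective F ⟨hinj, hsurj⟩
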